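/- If A and B are n×n complex matrices and 1 ≤ k ≤ n, then S_k(AA*)·S_k(BB*) ≥ |S_k(AB*)|², where S_k(M) denotes the normalized k-th elementary symmetric function of M, i.e., the coefficient of t^{n-k} in (binom(n,k))^{-1}·det(M + t·Id). -/

import Mathlib

open Matrix Finset Polynomial

open Matrix Finset Polynomial

lemma det_mul_expand {ι : Type*} [Fintype ι] [DecidableEq ι] {n : ℕ}
    (X : Matrix ι (Fin n) ℂ) (Y : Matrix (Fin n) ι ℂ) :
    (X * Y).det = ∑ f : ι → Fin n, (∏ i, Y (f i) i) * (X.submatrix id f).det := by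
  calc (X * Y).det
      = ∑ σ : Equiv.Perm ι, ((Equiv.Perm.sign σ : ℤ) : ℂ) * ∏ i, ∑ j, X (σ i) j * Y j i := by
        simp only [det_apply', mul_apply]
    _ = ∑ σ : Equiv.Perm ι, ∑ f : ι → Fin n,
          ((Equiv.Perm.sign σ : ℤ) : ℂ) * ∏ i, X (σ i) (f i) * Y (f i) i := by
        simp only [Finset.prod_univ_sum, Fintype.piFinset_univ, Finset.mul_sum]
    _ = ∑ f : ι → Fin n, ∑ σ : Equiv.Perm ι,
          ((Equiv.Perm.sign σ : ℤ) : ℂ) * ∏ i, X (σ i) (f i) * Y (f i) i :=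
        Finset.sum_comm
    _ = ∑ f : ι → Fin n, (∏ i, Y (f i) i) * (X.submatrix id f).det := by
        refine Finset.sum_congr rfl fun f _ => ?_
        rw [det_apply', Finset.mul_sum]
        refine Finset.sum_congr rfl fun σ _ => ?_
        simp only [Finset.prod_mul_distrib, Matrix.submatrix_apply, id_eq]
        ring

lemma cauchy_binet {ι : Type*} [Fintype ι] [DecidableEq ι] {n : ℕ}
    (X : Matrix ι (Fin n) ℂ) (Y : Matrix (Fin n) ι ℂ) :
    ((Fintype.card ι).factorial : ℂ) * (X * Y).det
      = ∑ f : ι → Fin n, (X.submatrix id f).det * (Y.submatrix f id).det := by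
  have hcard : ((Fintype.card ι).factorial : ℂ) = ∑ _τ : Equiv.Perm ι, (1 : ℂ) := by
    simp [Finset.card_univ, Fintype.card_perm]
  calc ((Fintype.card ι).factorial : ℂ) * (X * Y).det
      = ∑ τ : Equiv.Perm ι, (X * Y).det := by rw [hcard, Finset.sum_mul, one_mul]
    _ = ∑ τ : Equiv.Perm ι, ∑ g : ι → Fin n,
          (∏ i, Y (g (τ i)) i) * (((Equiv.Perm.sign τ : ℤ) : ℂ) * (X.submatrix id g).det) := by
        refine Finset.sum_congr rfl fun τ _ => ?_
        rw [det_mul_expand]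
        refine Fintype.sum_equiv (Equiv.arrowCongr (τ : ι ≃ ι) (Equiv.refl (Fin n))) _ _
          fun f => ?_
        have h1 : (Equiv.arrowCongr (τ : ι ≃ ι) (Equiv.refl (Fin n))) f = f ∘ τ.symm := by
          ext i; simp [Equiv.arrowCongr]
        rw [h1]
        have h2 : X.submatrix id (f ∘ τ.symm) = (X.submatrix id f).submatrix id τ.symm := rfl
        rw [h2, Matrix.det_permute']
        have h3 : ((Equiv.Perm.sign τ.symm : ℤ) : ℂ) = ((Equiv.Perm.sign τ : ℤ) : ℂ) := by
          rw [Equiv.Perm.sign_symm]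
        have h4 : ((Equiv.Perm.sign τ : ℤ) : ℂ) * ((Equiv.Perm.sign τ : ℤ) : ℂ) = 1 := by
          rcases Int.units_eq_one_or (Equiv.Perm.sign τ) with h|h <;> simp [h]
        have h5 : ∀ i, f (τ.symm (τ i)) = f i := fun i => by rw [Equiv.symm_apply_apply]
        simp only [Function.comp_apply, h3, h5]
        linear_combination (-((∏ i, Y (f i) i) * (X.submatrix id f).det)) * h4
    _ = ∑ g : ι → Fin n, (X.submatrix id g).det *
          (∑ τ : Equiv.Perm ι, ((Equiv.Perm.sign τ : ℤ) : ℂ) * ∏ i, Y (g (τ i)) i) := by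
        rw [Finset.sum_comm]
        refine Finset.sum_congr rfl fun g _ => ?_
        rw [Finset.mul_sum]
        refine Finset.sum_congr rfl fun τ _ => ?_
        ring
    _ = ∑ f : ι → Fin n, (X.submatrix id f).det * (Y.submatrix f id).det := by
        refine Finset.sum_congr rfl fun g _ => ?_
        congr 1
        rw [det_apply']
        rfl

open Matrix Finset Polynomial

lemma det_piecewise_one {n : ℕ} (M : Matrix (Fin n) (Fin n) ℂ[X]) (s : Finset (Fin n)) :
    Matrix.det (Matrix.of (s.piecewise (1 : Matrix (Fin n) (Fin n) ℂ[X]) M))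
      = (M.submatrix (Subtype.val : {x // x ∉ s} → Fin n) Subtype.val).det := by
  classical
  rw [← Matrix.det_submatrix_equiv_self (Equiv.sumCompl (· ∈ s))]
  have hblock : Matrix.submatrix (Matrix.of (s.piecewise (1 : Matrix (Fin n) (Fin n) ℂ[X]) M))
        (Equiv.sumCompl (· ∈ s)) (Equiv.sumCompl (· ∈ s))
      = Matrix.fromBlocks 1 0
          (M.submatrix (fun i : {x // ¬ x ∈ s} => (i : Fin n)) (fun j : {x // x ∈ s} => (j : Fin n)))
          (M.submatrix (fun i : {x // ¬ x ∈ s} => (i : Fin n)) (fun j : {x // ¬ x ∈ s} => (j : Fin n))) := by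
    ext i j : 1
    cases i with
    | inl i =>
      have hi : (i : Fin n) ∈ s := i.2
      cases j with
      | inl j =>
        simp only [Matrix.submatrix_apply, Equiv.sumCompl_apply_inl, Matrix.of_apply,
          Finset.piecewise, if_pos hi, Matrix.fromBlocks_apply₁₁]
        simp [Matrix.one_apply]
      | inr j =>
        have hj : ¬ (j : Fin n) ∈ s := j.2
        simp only [Matrix.submatrix_apply, Equiv.sumCompl_apply_inl, Equiv.sumCompl_apply_inr,
          Matrix.of_apply, Finset.piecewise, if_pos hi, Matrix.fromBlocks_apply₁₂,
          Matrix.zero_apply]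
        rw [Matrix.one_apply_ne]
        intro h; exact hj (h ▸ hi)
    | inr i =>
      have hi : ¬ (i : Fin n) ∈ s := i.2
      cases j with
      | inl j =>
        simp [Matrix.submatrix_apply, Finset.piecewise, hi]
      | inr j =>
        simp [Matrix.submatrix_apply, Finset.piecewise, hi]
  rw [hblock, Matrix.det_fromBlocks_zero₁₂, Matrix.det_one, one_mul]

lemma coeff_det_princ {n k : ℕ} (M : Matrix (Fin n) (Fin n) ℂ) :
    ((M.map Polynomial.C + (Polynomial.X : Polynomial ℂ) • 1).det).coeff (n - k)
      = ∑ s : Finset (Fin n), if s.card = n - k then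
          (M.submatrix (Subtype.val : {x // x ∉ s} → Fin n) Subtype.val).det else 0 := by
  classical
  have h1 : (M.map Polynomial.C + (Polynomial.X : Polynomial ℂ) • 1).det
      = ∑ s : Finset (Fin n),
          Matrix.det (Matrix.of (s.piecewise ((Polynomial.X : Polynomial ℂ) • (1 : Matrix (Fin n) (Fin n) ℂ[X])) (M.map Polynomial.C))) := by
    rw [add_comm]
    exact (Matrix.detRowAlternating.toMultilinearMap.map_add_univ _ _)
  have h2 : ∀ s : Finset (Fin n),
      Matrix.det (Matrix.of (s.piecewise ((Polynomial.X : Polynomial ℂ) • (1 : Matrix (Fin n) (Fin n) ℂ[X])) (M.map Polynomial.C)))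
        = (Polynomial.X : ℂ[X]) ^ s.card *
            Polynomial.C ((M.submatrix (Subtype.val : {x // x ∉ s} → Fin n) Subtype.val).det) := by
    intro s
    set m : Matrix (Fin n) (Fin n) ℂ[X] := Matrix.of (s.piecewise (1 : Matrix (Fin n) (Fin n) ℂ[X]) (M.map Polynomial.C)) with hm
    have e1 : Matrix.of (s.piecewise ((Polynomial.X : Polynomial ℂ) • (1 : Matrix (Fin n) (Fin n) ℂ[X])) (M.map Polynomial.C))
        = Matrix.of (s.piecewise (fun i => (Polynomial.X : ℂ[X]) • m i) m) := by
      ext i j : 1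
      by_cases hi : i ∈ s
      · simp [hm, Finset.piecewise, hi]
      · simp [hm, Finset.piecewise, hi]
    rw [e1]
    have e2 : Matrix.det (Matrix.of (s.piecewise (fun i => (Polynomial.X : ℂ[X]) • m i) m))
        = (∏ _i ∈ s, (Polynomial.X : ℂ[X])) • Matrix.det m :=
      Matrix.detRowAlternating.toMultilinearMap.map_piecewise_smul _ m s
    rw [e2, Finset.prod_const, hm, det_piecewise_one, smul_eq_mul]
    congr 1
    rw [Matrix.submatrix_map, ← RingHom.mapMatrix_apply, ← RingHom.map_det]
  rw [h1]
  simp only [h2]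
  rw [Polynomial.finset_sum_coeff]
  refine Finset.sum_congr rfl fun s _ => ?_
  rw [mul_comm, Polynomial.coeff_C_mul, Polynomial.coeff_X_pow]
  simp [eq_comm]

lemma key_identity {n k : ℕ} (hkn : k ≤ n) (A B : Matrix (Fin n) (Fin n) ℂ) :
    ((k.factorial : ℂ)) * (((A * B.conjTranspose).map Polynomial.C + (Polynomial.X : Polynomial ℂ) • 1).det).coeff (n - k)
      = ∑ s : Finset (Fin n), if s.card = n - k then
          (∑ f : {x // x ∉ s} → Fin n,
            (A.submatrix Subtype.val f).det * star (B.submatrix Subtype.val f).det) else 0 := by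
  classical
  rw [coeff_det_princ, Finset.mul_sum]
  refine Finset.sum_congr rfl fun s _ => ?_
  rw [mul_ite, mul_zero]
  by_cases hs : s.card = n - k
  · simp only [hs, if_true]
    have hcard : Fintype.card {x // x ∉ s} = k := by
      rw [Fintype.card_subtype_compl, Fintype.card_coe, hs, Fintype.card_fin]
      omega
    have hsub : (A * B.conjTranspose).submatrix (Subtype.val : {x // x ∉ s} → Fin n)
          (Subtype.val : {x // x ∉ s} → Fin n)
        = (A.submatrix (Subtype.val : {x // x ∉ s} → Fin n) id) *
          (B.conjTranspose.submatrix id (Subtype.val : {x // x ∉ s} → Fin n)) :=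
      Matrix.submatrix_mul A B.conjTranspose _ id _ Function.bijective_id
    rw [hsub]
    have hcb := cauchy_binet (A.submatrix (Subtype.val : {x // x ∉ s} → Fin n) id)
      (B.conjTranspose.submatrix id (Subtype.val : {x // x ∉ s} → Fin n))
    rw [hcard] at hcb
    rw [hcb]
    refine Finset.sum_congr rfl fun f _ => ?_
    simp only [Matrix.submatrix_submatrix, Function.comp_id, Function.id_comp]
    congr 1
    rw [← Matrix.conjTranspose_submatrix, Matrix.det_conjTranspose]
  · simp [hs]

/-- The normalized `k`-th elementary symmetric function of an `n × n` complex matrix `M`: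
the coefficient of `t^(n-k)` in `(binom(n,k))⁻¹ · det (M + t·Id)`. -/
noncomputable def Sk (n k : ℕ) (M : Matrix (Fin n) (Fin n) ℂ) : ℂ :=
  ((n.choose k : ℂ))⁻¹ *
    ((Matrix.det (M.map Polynomial.C +
      (Polynomial.X : Polynomial ℂ) • (1 : Matrix (Fin n) (Fin n) (Polynomial ℂ)))).coeff (n - k))

theorem sk_gram_inequality (n k : ℕ) (hk1 : 1 ≤ k) (hkn : k ≤ n)
    (A B : Matrix (Fin n) (Fin n) ℂ) :
    ‖Sk n k (A * B.conjTranspose)‖ ^ 2 ≤ (Sk n k (A * A.conjTranspose)).re * (Sk n k (B * B.conjTranspose)).re := by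
  classical
  set P : Finset (Σ s : Finset (Fin n), ({x // x ∉ s} → Fin n)) :=
    (Finset.univ.filter (fun s : Finset (Fin n) => s.card = n - k)).sigma (fun _ => Finset.univ)
    with hP
  set w : Matrix (Fin n) (Fin n) ℂ → (Σ s : Finset (Fin n), ({x // x ∉ s} → Fin n)) → ℂ :=
    fun M p => (M.submatrix Subtype.val p.2).det with hw
  have hZ : ∀ A B : Matrix (Fin n) (Fin n) ℂ,
      ((k.factorial : ℂ)) *
        (((A * B.conjTranspose).map Polynomial.C +
          (Polynomial.X : Polynomial ℂ) • 1).det).coeff (n - k)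
        = ∑ p ∈ P, w A p * star (w B p) := by
    intro A B
    rw [key_identity hkn A B, ← Finset.sum_filter, hP, Finset.sum_sigma]
  set c : ℝ := ((n.choose k : ℝ) * k.factorial)⁻¹ with hc
  have hc0 : 0 ≤ c := by positivity
  have hch : ((n.choose k : ℂ)) ≠ 0 := by
    exact_mod_cast Nat.cast_ne_zero.mpr (Nat.choose_pos hkn).ne'
  have hk0 : ((k.factorial : ℂ)) ≠ 0 := by
    exact_mod_cast Nat.cast_ne_zero.mpr k.factorial_ne_zero
  have hSk : ∀ A B : Matrix (Fin n) (Fin n) ℂ,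
      Sk n k (A * B.conjTranspose) = (c : ℂ) * ∑ p ∈ P, w A p * star (w B p) := by
    intro A B
    have h := hZ A B
    rw [Sk, ← h, hc]
    push_cast
    field_simp
  have hdiag : ∀ A : Matrix (Fin n) (Fin n) ℂ,
      (Sk n k (A * A.conjTranspose)).re = c * ∑ p ∈ P, ‖w A p‖^2 := by
    intro A
    rw [hSk A A]
    have h2 : ∑ p ∈ P, w A p * star (w A p)
        = ((∑ p ∈ P, ‖w A p‖^2 : ℝ) : ℂ) := by
      push_cast
      refine Finset.sum_congr rfl fun p _ => ?_
      rw [Complex.star_def, Complex.mul_conj]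
      norm_cast
      rw [Complex.sq_norm]
    rw [h2, ← Complex.ofReal_mul, Complex.ofReal_re]
  have habs : ‖∑ p ∈ P, w A p * star (w B p)‖
      ≤ ∑ p ∈ P, ‖w A p‖ * ‖w B p‖ := by
    refine (norm_sum_le _ _).trans_eq ?_
    refine Finset.sum_congr rfl fun p _ => ?_
    rw [norm_mul]
    congr 1
    exact Complex.norm_conj _
  have hcs := Finset.sum_mul_sq_le_sq_mul_sq P (fun p => ‖w A p‖)
    (fun p => ‖w B p‖)
  rw [hSk A B, hdiag A, hdiag B, norm_mul, Complex.norm_of_nonneg hc0]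
  have h1 : ‖∑ p ∈ P, w A p * star (w B p)‖ ^ 2
      ≤ (∑ p ∈ P, ‖w A p‖ * ‖w B p‖) ^ 2 :=
    pow_le_pow_left₀ (norm_nonneg _) habs 2
  have h3 := h1.trans hcs
  nlinarith [mul_le_mul_of_nonneg_left h3 (sq_nonneg c)]
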